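/- Let U ⊆ ℂ be an open set containing the unit circle, let τ : ℂ → ℂ be complex differentiable on U with |τ(z)| = 1 for every z with |z| = 1, and let α > 0 be such that |τ'(z)| ≥ α for every z with |z| = 1. Then for every z with |z| = 1 the quantity z·τ'(z)/τ(z) is a real number, and moreover either Re(z·τ'(z)/τ(z)) ≥ α for all z with |z| = 1, or Re(z·τ'(z)/τ(z)) ≤ −α for all z with |z| = 1. -/

import Mathlib

open Complex

/-- Let U be open containing the unit circle, τ complex differentiable on U with
|τ(z)| = 1 on the unit circle and |τ'(z)| ≥ α > 0 on the unit circle. Then for every z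
on the unit circle the quantity z·τ'(z)/τ(z) is real, and either Re(z·τ'(z)/τ(z)) ≥ α
everywhere on the circle or Re(z·τ'(z)/τ(z)) ≤ −α everywhere on the circle. -/
theorem logarithmic_derivative_real_on_circle (U : Set ℂ) (hU : IsOpen U)
    (hsub : Metric.sphere (0 : ℂ) 1 ⊆ U)
    (τ : ℂ → ℂ) (hdiff : ∀ z ∈ U, DifferentiableAt ℂ τ z)
    (hmod : ∀ z : ℂ, ‖z‖ = 1 → ‖τ z‖ = 1)
    (α : ℝ) (hα : 0 < α)
    (hexp : ∀ z : ℂ, ‖z‖ = 1 → α ≤ ‖deriv τ z‖) :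
    (∀ z : ℂ, ‖z‖ = 1 → (z * deriv τ z / τ z).im = 0) ∧
    ((∀ z : ℂ, ‖z‖ = 1 → α ≤ (z * deriv τ z / τ z).re) ∨
     (∀ z : ℂ, ‖z‖ = 1 → (z * deriv τ z / τ z).re ≤ -α)) := by
  have hsph : ∀ z : ℂ, ‖z‖ = 1 → z ∈ Metric.sphere (0 : ℂ) 1 := by
    intro z hz
    simp [Complex.dist_eq, hz]
  have hτne : ∀ z : ℂ, ‖z‖ = 1 → τ z ≠ 0 := by
    intro z hz h0
    have := hmod z hz
    rw [h0] at this
    simp at this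
  -- Key: for z on the circle, Im (z * τ'(z) * conj (τ z)) = 0
  have hkey : ∀ z : ℂ, ‖z‖ = 1 →
      (z * deriv τ z * (starRingEnd ℂ) (τ z)).im = 0 := by
    intro z hz
    have hzU : z ∈ U := hsub (hsph z hz)
    set c : ℝ → ℂ := fun θ => z * Complex.exp (θ * Complex.I) with hc_def
    have hcθ : ∀ θ : ℝ, ‖c θ‖ = 1 := by
      intro θ
      simp [hc_def, Complex.norm_exp, hz]
    have hc0 : c 0 = z := by simp [hc_def]
    -- derivative of c at 0
    have h1 : HasDerivAt (fun θ : ℝ => (θ : ℂ) * Complex.I) Complex.I 0 := by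
      simpa using (Complex.ofRealCLM.hasDerivAt (x := (0 : ℝ))).mul_const Complex.I
    have h2 : HasDerivAt (fun θ : ℝ => Complex.exp ((θ : ℂ) * Complex.I)) Complex.I 0 := by
      have hg : HasDerivAt Complex.exp (Complex.exp (((0 : ℝ) : ℂ) * Complex.I))
          (((0 : ℝ) : ℂ) * Complex.I) := Complex.hasDerivAt_exp _
      simpa [Function.comp_def] using hg.scomp (0 : ℝ) h1
    have hc : HasDerivAt c (z * Complex.I) 0 := by
      simpa using h2.const_mul z
    have hτz : HasDerivAt τ (deriv τ z) (c 0) := by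
      rw [hc0]; exact (hdiff z hzU).hasDerivAt
    have hg : HasDerivAt (fun θ : ℝ => τ (c θ)) (z * Complex.I * deriv τ z) 0 := by
      have := hτz.scomp (0 : ℝ) hc
      simpa [Function.comp_def, smul_eq_mul, mul_comm, mul_assoc, mul_left_comm] using this
    have hconj : HasDerivAt (fun θ : ℝ => star (τ (c θ)))
        (star (z * Complex.I * deriv τ z)) 0 := hg.star
    have hmul : HasDerivAt (fun θ : ℝ => τ (c θ) * star (τ (c θ)))
        (z * Complex.I * deriv τ z * star (τ (c 0)) +
          τ (c 0) * star (z * Complex.I * deriv τ z)) 0 := hg.mul hconj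
    have hre : HasDerivAt (fun θ : ℝ => (τ (c θ) * star (τ (c θ))).re)
        ((z * Complex.I * deriv τ z * star (τ z) +
          τ z * star (z * Complex.I * deriv τ z)).re) 0 := by
      simpa only [hc0, Function.comp_def, Complex.reCLM_apply] using
        Complex.reCLM.hasFDerivAt.comp_hasDerivAt 0 hmul
    have hone : (fun θ : ℝ => (τ (c θ) * star (τ (c θ))).re) = fun _ : ℝ => (1 : ℝ) := by
      funext θ
      have h := hmod (c θ) (hcθ θ)
      have : τ (c θ) * star (τ (c θ)) = ((Complex.normSq (τ (c θ)) : ℝ) : ℂ) := by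
        simpa [Complex.star_def] using (Complex.mul_conj (τ (c θ)))
      rw [this]
      simp [Complex.normSq_eq_norm_sq, h]
    have hD : (z * Complex.I * deriv τ z * star (τ z) +
        τ z * star (z * Complex.I * deriv τ z)).re = 0 := by
      have h0 : HasDerivAt (fun _ : ℝ => (1 : ℝ))
          ((z * Complex.I * deriv τ z * star (τ z) +
            τ z * star (z * Complex.I * deriv τ z)).re) 0 := hone ▸ hre
      exact h0.unique (hasDerivAt_const 0 1)
    have hiden : (z * Complex.I * deriv τ z * star (τ z) +
        τ z * star (z * Complex.I * deriv τ z)).re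
        = -2 * (z * deriv τ z * (starRingEnd ℂ) (τ z)).im := by
      simp [Complex.star_def, Complex.add_re, Complex.mul_re, Complex.mul_im,
        Complex.conj_re, Complex.conj_im, Complex.I_re, Complex.I_im]
      ring
    have := hiden ▸ hD
    linarith
  -- rewrite the quotient
  have hdiv : ∀ z : ℂ, ‖z‖ = 1 →
      z * deriv τ z / τ z = z * deriv τ z * (starRingEnd ℂ) (τ z) := by
    intro z hz
    rw [div_eq_mul_inv, Complex.inv_def]
    have : Complex.normSq (τ z) = 1 := by
      rw [Complex.normSq_eq_norm_sq, hmod z hz]; norm_num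
    rw [this]
    simp
  have him : ∀ z : ℂ, ‖z‖ = 1 → (z * deriv τ z / τ z).im = 0 := by
    intro z hz
    rw [hdiv z hz]
    exact hkey z hz
  refine ⟨him, ?_⟩
  -- continuity of deriv τ on U
  have hderivCont : ∀ z ∈ U, ContinuousAt (deriv τ) z := by
    intro z hz
    have hdo : DifferentiableOn ℂ τ U := fun w hw => (hdiff w hw).differentiableWithinAt
    have ha : AnalyticAt ℂ τ z := hdo.analyticAt (hU.mem_nhds hz)
    have hfc : ContinuousAt (fderiv ℂ τ) z := ha.fderiv.continuousAt
    have : ContinuousAt (fun w => fderiv ℂ τ w 1) z :=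
      ((ContinuousLinearMap.apply ℂ ℂ (1 : ℂ)).continuous.continuousAt).comp hfc
    simpa [fderiv_apply_one_eq_deriv] using this
  set e : ℝ → ℂ := fun θ => Complex.exp (θ * Complex.I) with he_def
  have heabs : ∀ θ : ℝ, ‖e θ‖ = 1 := by
    intro θ; simp [he_def, Complex.norm_exp]
  have hecont : Continuous e := by
    exact Complex.continuous_exp.comp (Complex.continuous_ofReal.mul continuous_const)
  set F : ℝ → ℝ := fun θ => (e θ * deriv τ (e θ) / τ (e θ)).re with hF_def
  have hFcont : Continuous F := by
    rw [continuous_iff_continuousAt]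
    intro θ
    have heU : e θ ∈ U := hsub (hsph _ (heabs θ))
    have h1 : ContinuousAt (fun w : ℂ => w * deriv τ w / τ w) (e θ) := by
      exact ((continuousAt_id.mul (hderivCont _ heU)).div
        (hdiff _ heU).continuousAt (hτne _ (heabs θ)))
    exact Complex.continuous_re.continuousAt.comp (h1.comp (hecont.continuousAt))
  have hFabs : ∀ θ : ℝ, α ≤ |F θ| := by
    intro θ
    have hz := heabs θ
    have h1 : ‖e θ * deriv τ (e θ) / τ (e θ)‖ = ‖deriv τ (e θ)‖ := by
      rw [norm_div, norm_mul, hz, hmod _ hz, one_mul, div_one]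
    have h2 : |F θ| = ‖e θ * deriv τ (e θ) / τ (e θ)‖ :=
      Complex.abs_re_eq_norm.mpr (him _ hz)
    rw [h2, h1]
    exact hexp _ hz
  have hFsplit : ∀ θ : ℝ, α ≤ F θ ∨ F θ ≤ -α := by
    intro θ
    rcases le_abs.mp (hFabs θ) with h | h
    · exact Or.inl h
    · exact Or.inr (by linarith)
  set A : Set ℝ := {θ | α ≤ F θ} with hA_def
  have hA_closed : IsClosed A := isClosed_le continuous_const hFcont
  have hA_open : IsOpen A := by
    have : A = {θ | -α < F θ} := by
      ext θ
      simp only [hA_def, Set.mem_setOf_eq]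
      constructor
      · intro h; linarith
      · intro h
        rcases hFsplit θ with h1 | h1
        · exact h1
        · linarith
    rw [this]
    exact isOpen_lt continuous_const hFcont
  have hFz : ∀ z : ℂ, ‖z‖ = 1 → F (Complex.arg z) = (z * deriv τ z / τ z).re := by
    intro z hz
    have : e (Complex.arg z) = z := by
      have := Complex.norm_mul_exp_arg_mul_I z
      rw [hz] at this
      simpa [he_def] using this
    rw [hF_def]
    simp only [this]
  rcases isClopen_iff.mp ⟨hA_closed, hA_open⟩ with hempty | huniv
  · right
    intro z hz
    have h1 : Complex.arg z ∉ A := by rw [hempty]; exact Set.notMem_empty _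
    have h2 : ¬ α ≤ F (Complex.arg z) := h1
    rcases hFsplit (Complex.arg z) with h | h
    · exact absurd h h2
    · rw [← hFz z hz]; exact h
  · left
    intro z hz
    have h1 : Complex.arg z ∈ A := by rw [huniv]; trivial
    rw [← hFz z hz]; exact h1
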